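/- Let 1 ≤ k ≤ n and v ∈ Λ_k(ℝⁿ). Then span(v) is the smallest linear subspace W of ℝⁿ such that v ∈ Λ_k(W): namely, v lies in the image of Λ_k(span(v)) under the canonical inclusion into Λ_k(ℝⁿ), and for every linear subspace W ⊆ ℝⁿ with v in the image of Λ_k(W) one has span(v) ⊆ W. -/

import Mathlib

open MeasureTheory Metric Filter ENNReal Topology

noncomputable section

/-- Euclidean `n`-space. -/
abbrev Euc (n : ℕ) := EuclideanSpace ℝ (Fin n)

/-- Coordinates of an element of the exterior algebra of `ℝⁿ` with respect to the
standard basis `{e_s : s ⊆ {1,…,n}}`.  The degree-`k` part corresponds to the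
coefficients indexed by sets of cardinality `k`, i.e. to `Λ_k(ℝⁿ)` (resp. `Λ^k(ℝⁿ)`). -/
abbrev MV (n : ℕ) := Finset (Fin n) → ℝ

namespace MV

variable {n : ℕ}

/-- `v` belongs to `Λ_k(ℝⁿ)` (equivalently `Λ^k(ℝⁿ)`): only coefficients of degree `k`
are nonzero. -/
def IsGrade (k : ℕ) (v : MV n) : Prop := ∀ s : Finset (Fin n), s.card ≠ k → v s = 0

/-- The duality pairing `⟨ζ; α⟩ := Σ_i ζ_i α_i`. -/
def pair (v w : MV n) : ℝ := ∑ s : Finset (Fin n), v s * w s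

/-- The sign `(-1)^{#{(a,b) ∈ s × t : b < a}}` showing up in the wedge product of basis
elements: `e_s ∧ e_t = sign s t • e_{s ∪ t}` for disjoint `s`, `t`. -/
def sign (s t : Finset (Fin n)) : ℝ :=
  (-1 : ℝ) ^ ((s ×ˢ t).filter fun p => p.2 < p.1).card

/-- The wedge product, in coordinates. -/
def wedge (v w : MV n) : MV n :=
  fun u => ∑ s ∈ u.powerset, sign s (u \ s) * v s * w (u \ s)

/-- The basis multivector `e_t` (resp. basis covector `dx_t`). -/
def delta (t : Finset (Fin n)) : MV n := fun s => if s = t then 1 else 0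

/-- Interior multiplication `ζ ⌟ α`, characterized by `⟨ζ ⌟ α; β⟩ = ⟨ζ; α ∧ β⟩`. -/
def imul (v a : MV n) : MV n := fun t => pair v (wedge a (delta t))

/-- The canonical embedding `ℝⁿ = Λ_1(ℝⁿ) ↪ Λ_•(ℝⁿ)`. -/
def embed (x : Euc n) : MV n := fun s => ∑ i : Fin n, if s = {i} then x i else 0

/-- The canonical identification of the degree-one part of `Λ_•(ℝⁿ)` with `ℝⁿ`. -/
def toVec (v : MV n) : Euc n := WithLp.toLp 2 (fun i => v {i})

/-- The wedge product `w 0 ∧ w 1 ∧ ⋯ ∧ w (k-1)` of a family of vectors of `ℝⁿ`. -/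
def wedgeFam {k : ℕ} (w : Fin k → Euc n) : MV n :=
  (List.ofFn fun i => embed (w i)).foldr wedge (delta ∅)

/-- A `k`-vector is simple if it is a wedge product of `k` vectors of `ℝⁿ`. -/
def IsSimple (k : ℕ) (v : MV n) : Prop := ∃ w : Fin k → Euc n, v = wedgeFam w

/-- `span(v) := {v ⌟ α : α ∈ Λ^{k-1}(ℝⁿ)} ⊆ ℝⁿ`, for `v ∈ Λ_k(ℝⁿ)`. -/
def spanSet (k : ℕ) (v : MV n) : Set (Euc n) :=
  {u | ∃ a : MV n, IsGrade (k - 1) a ∧ u = toVec (imul v a)}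

/-- The (Euclidean) norm of a multivector. -/
def norm' (v : MV n) : ℝ := Real.sqrt (∑ s : Finset (Fin n), v s ^ 2)

/-- The exterior derivative of a (multi)covector field, in coordinates:
`(dψ)_u(x) = Σ_{i ∈ u} sign({i}, u \ {i}) ∂_i ψ_{u \ {i}}(x)`. -/
def extDeriv (ψ : Euc n → MV n) (x : Euc n) : MV n :=
  fun u => ∑ i ∈ u, sign {i} (u \ {i}) * fderiv ℝ ψ x (EuclideanSpace.single i 1) (u \ {i})

end MV

/-- `x` is an `h`-superdensity point of `E` with respect to `λ`, i.e.
`λ(B_r(x) ∖ E) = λ(B_r(x))·o(r^h)` as `r → 0+`. -/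
def SuperdensityPt {n : ℕ} (lam : Measure (Euc n)) (h : ℝ) (E : Set (Euc n)) (x : Euc n) :
    Prop :=
  ∀ ε > (0 : ℝ), ∃ r₀ > (0 : ℝ), ∀ r : ℝ, 0 < r → r < r₀ →
    lam (ball x r \ E) ≤ ENNReal.ofReal (ε * r ^ h) * lam (ball x r)

/-- The upper `s`-density `Θ^{*s}(μ, x) := limsup_{r→0+} μ(B_r(x))/(2r)^s`. -/
def upperDensity {n : ℕ} (μ : Measure (Euc n)) (s : ℝ) (x : Euc n) : ℝ≥0∞ :=
  Filter.limsup (fun r : ℝ => μ (ball x r) / ENNReal.ofReal ((2 * r) ^ s)) (𝓝[>] 0)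

/-- The lower `s`-density `Θ^s_*(μ, x) := liminf_{r→0+} μ(B_r(x))/(2r)^s`. -/
def lowerDensity {n : ℕ} (μ : Measure (Euc n)) (s : ℝ) (x : Euc n) : ℝ≥0∞ :=
  Filter.liminf (fun r : ℝ => μ (ball x r) / ENNReal.ofReal ((2 * r) ^ s)) (𝓝[>] 0)

/-- The upper derivative `D̄(λ, μ, x) := limsup_{r→0+} λ(B_r(x))/μ(B_r(x))`. -/
def upperDeriv {n : ℕ} (lam μ : Measure (Euc n)) (x : Euc n) : ℝ≥0∞ :=
  Filter.limsup (fun r : ℝ => lam (ball x r) / μ (ball x r)) (𝓝[>] 0)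

/-- The total variation `|τμ| = |τ|μ` of the current `T = τμ`. -/
def totalVar {n : ℕ} (τ : Euc n → MV n) (μ : Measure (Euc n)) : Measure (Euc n) :=
  μ.withDensity fun x => ENNReal.ofReal (MV.norm' (τ x))

/-- The Lebesgue-point conditions (3.2): the `μ`-averages of `τ` and of `|τ|` on `B_r(x)`
converge to `τ(x)` and `|τ(x)|` respectively, as `r → 0+`. -/
def LebesguePt {n : ℕ} (μ : Measure (Euc n)) (τ : Euc n → MV n) (x : Euc n) : Prop :=
  Tendsto (fun r : ℝ => (μ (ball x r)).toReal⁻¹ • ∫ y in ball x r, τ y ∂μ)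
    (𝓝[>] 0) (𝓝 (τ x)) ∧
  Tendsto (fun r : ℝ => (∫ y in ball x r, MV.norm' (τ y) ∂μ) / (μ (ball x r)).toReal)
    (𝓝[>] 0) (𝓝 (MV.norm' (τ x)))

/-- `K(τ, ω) := {y ∈ U : ⟨τ(y) ⌟ α; ω_y⟩ = 0 for all α ∈ Λ^{h-l}(ℝⁿ)}`, where `τ` is an
`h`-vectorfield and `ω` a differential `l`-form on `U`. -/
def Kset {n : ℕ} (h l : ℕ) (U : Set (Euc n)) (τ : Euc n → MV n) (ω : Euc n → MV n) :
    Set (Euc n) :=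
  {y ∈ U | ∀ a : MV n, MV.IsGrade (h - l) a → MV.pair (MV.imul (τ y) a) (ω y) = 0}

/-- `T = τμ` is a normal `h`-current on `Ω` with `∂T = τ'μ'` : both measures are finite,
`τ, τ'` are Borel and integrable, take values in `Λ_h` resp. `Λ_{h-1}`, and
`∫ ⟨τ'; ψ⟩ dμ' = ∫ ⟨τ; dψ⟩ dμ` for every smooth compactly supported `(h-1)`-form `ψ` on `Ω`. -/
def IsNormalPair {n : ℕ} (h : ℕ) (Ω : Set (Euc n)) (μ μ' : Measure (Euc n))
    (τ τ' : Euc n → MV n) : Prop :=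
  IsFiniteMeasure μ ∧ IsFiniteMeasure μ' ∧
  Measurable τ ∧ Measurable τ' ∧
  Integrable τ μ ∧ Integrable τ' μ' ∧
  (∀ x, MV.IsGrade h (τ x)) ∧ (∀ x, MV.IsGrade (h - 1) (τ' x)) ∧
  ∀ ψ : Euc n → MV n, ContDiff ℝ (⊤ : ℕ∞) ψ → HasCompactSupport ψ → tsupport ψ ⊆ Ω →
    (∀ y, MV.IsGrade (h - 1) (ψ y)) →
    ∫ y, MV.pair (τ' y) (ψ y) ∂μ' = ∫ y, MV.pair (τ y) (MV.extDeriv ψ y) ∂μ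

/-- `D` is a `k`-distribution of class `C^p` on `Ω`: each `D(x)` is a `k`-dimensional
subspace and, locally, `D` is the intersection of the kernels of `n - k` differential
1-forms of class `C^p` (the defining forms). -/
def IsDistribution {n : ℕ} (p : ℕ∞) (k : ℕ) (Ω : Set (Euc n))
    (D : Euc n → Submodule ℝ (Euc n)) : Prop :=
  (∀ x ∈ Ω, Module.finrank ℝ (D x) = k) ∧
  ∀ x ∈ Ω, ∃ U : Set (Euc n), U ⊆ Ω ∧ IsOpen U ∧ x ∈ U ∧
    ∃ ω : Fin (n - k) → Euc n → (Euc n →L[ℝ] ℝ),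
      (∀ j, ContDiffOn ℝ p (ω j) U) ∧
      ∀ y ∈ U, D y = ⨅ j, LinearMap.ker (ω j y : Euc n →ₗ[ℝ] ℝ)

/-- The tangency set `Γ(τ, D) := {x ∈ Ω : span(τ(x)) ⊆ D(x)}` of a `k`-vectorfield `τ`
with respect to a distribution `D`. -/
def tangencySet {n : ℕ} (k : ℕ) (Ω : Set (Euc n)) (τ : Euc n → MV n)
    (D : Euc n → Submodule ℝ (Euc n)) : Set (Euc n) :=
  {x ∈ Ω | MV.spanSet k (τ x) ⊆ (D x : Set (Euc n))}

/-- A `C¹` `k`-distribution `D` is involutive at `x`: for some family of `C¹` defining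
forms `ω⁽¹⁾, …, ω⁽ⁿ⁻ᵏ⁾` near `x`, each `(dω⁽ʲ⁾)_x` vanishes on `D(x) × D(x)`;
here `(dω)_x(u, v) = (Dω_x u)(v) − (Dω_x v)(u)`. -/
def InvolutiveAt {n : ℕ} (k : ℕ) (Ω : Set (Euc n)) (D : Euc n → Submodule ℝ (Euc n))
    (x : Euc n) : Prop :=
  ∃ U : Set (Euc n), U ⊆ Ω ∧ IsOpen U ∧ x ∈ U ∧
    ∃ ω : Fin (n - k) → Euc n → (Euc n →L[ℝ] ℝ),
      (∀ j, ContDiffOn ℝ 1 (ω j) U) ∧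
      (∀ y ∈ U, D y = ⨅ j, LinearMap.ker (ω j y : Euc n →ₗ[ℝ] ℝ)) ∧
      ∀ j, ∀ u ∈ D x, ∀ v ∈ D x, fderiv ℝ (ω j) x u v = fderiv ℝ (ω j) x v u

/-- `v ∈ Λ_k(W)` for a subspace `W ⊆ ℝⁿ`: `v` lies in the image of `Λ_k(W)` under the
canonical inclusion into `Λ_k(ℝⁿ)`, i.e. `v` is in the linear span of the wedge products
of `k` vectors of `W`. -/
def MemLambdaK {n : ℕ} (k : ℕ) (v : MV n) (W : Submodule ℝ (Euc n)) : Prop :=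
  v ∈ Submodule.span ℝ
    {z : MV n | ∃ w : Fin k → Euc n, (∀ i, w i ∈ W) ∧ z = MV.wedgeFam w}

namespace MV
open Finset
variable {n : ℕ}

lemma sign_mul_self (s t : Finset (Fin n)) : sign s t * sign s t = 1 := by
  unfold sign
  rw [← pow_add]
  exact Even.neg_one_pow ⟨_, rfl⟩

lemma sign_union_right (s : Finset (Fin n)) {t t' : Finset (Fin n)} (h : Disjoint t t') :
    sign s (t ∪ t') = sign s t * sign s t' := by
  unfold sign
  rw [← pow_add]
  congr 1
  have hd : Disjoint ((s ×ˢ t).filter fun p => p.2 < p.1)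
      ((s ×ˢ t').filter fun p => p.2 < p.1) := by
    apply Finset.disjoint_filter_filter
    rw [Finset.disjoint_left]
    rintro ⟨a, b⟩ hab hab'
    simp only [Finset.mem_product] at hab hab'
    exact (Finset.disjoint_left.mp h hab.2) hab'.2
  rw [Finset.product_union, Finset.filter_union, Finset.card_union_of_disjoint hd]

lemma sign_union_left {s s' : Finset (Fin n)} (t : Finset (Fin n)) (h : Disjoint s s') :
    sign (s ∪ s') t = sign s t * sign s' t := by
  unfold sign
  rw [← pow_add]
  congr 1
  have hd : Disjoint ((s ×ˢ t).filter fun p => p.2 < p.1)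
      ((s' ×ˢ t).filter fun p => p.2 < p.1) := by
    apply Finset.disjoint_filter_filter
    rw [Finset.disjoint_left]
    rintro ⟨a, b⟩ hab hab'
    simp only [Finset.mem_product] at hab hab'
    exact (Finset.disjoint_left.mp h hab.1) hab'.1
  rw [Finset.union_product, Finset.filter_union, Finset.card_union_of_disjoint hd]

lemma sign_singleton (i j : Fin n) :
    sign ({i} : Finset (Fin n)) {j} = if j < i then -1 else 1 := by
  unfold sign
  rw [Finset.singleton_product_singleton, Finset.filter_singleton]
  split_ifs <;> simp

lemma sign_singleton_swap {i j : Fin n} (h : i ≠ j) :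
    sign ({i} : Finset (Fin n)) {j} = - sign {j} {i} := by
  rw [sign_singleton, sign_singleton]
  rcases h.lt_or_gt with h' | h'
  · simp [h', h'.not_gt]
  · simp [h', h'.not_gt]

lemma sign_singleton_left (i : Fin n) (t : Finset (Fin n)) :
    sign {i} t = (-1 : ℝ) ^ (t.filter (· < i)).card := by
  unfold sign
  congr 1
  have : (({i} : Finset (Fin n)) ×ˢ t).filter (fun p => p.2 < p.1)
      = {i} ×ˢ (t.filter (· < i)) := by
    ext ⟨a, b⟩
    simp only [Finset.mem_filter, Finset.mem_product, Finset.mem_singleton]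
    constructor
    · rintro ⟨⟨rfl, hb⟩, h⟩; exact ⟨rfl, hb, h⟩
    · rintro ⟨rfl, hb, h⟩; exact ⟨⟨rfl, hb⟩, h⟩
  rw [this, Finset.card_product, Finset.card_singleton, one_mul]

lemma sign_singleton_right (t : Finset (Fin n)) (i : Fin n) :
    sign t {i} = (-1 : ℝ) ^ (t.filter (i < ·)).card := by
  unfold sign
  congr 1
  have : (t ×ˢ ({i} : Finset (Fin n))).filter (fun p => p.2 < p.1)
      = (t.filter (i < ·)) ×ˢ {i} := by
    ext ⟨a, b⟩
    simp only [Finset.mem_filter, Finset.mem_product, Finset.mem_singleton]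
    constructor
    · rintro ⟨⟨ha, rfl⟩, h⟩; exact ⟨⟨ha, h⟩, rfl⟩
    · rintro ⟨⟨ha, h⟩, rfl⟩; exact ⟨⟨ha, rfl⟩, h⟩
  rw [this, Finset.card_product, Finset.card_singleton, mul_one]

lemma sign_comm_single {i : Fin n} {t : Finset (Fin n)} (h : i ∉ t) :
    sign {i} t * sign t {i} = (-1 : ℝ) ^ t.card := by
  rw [sign_singleton_left, sign_singleton_right, ← pow_add]
  congr 1
  rw [← Finset.card_filter_add_card_filter_not (s := t) (p := (· < i))]
  congr 1
  apply congrArg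
  apply Finset.filter_congr
  intro a ha
  have hne : a ≠ i := fun e => h (e ▸ ha)
  simp only [not_lt, eq_iff_iff]
  constructor
  · exact le_of_lt
  · intro h'; exact lt_of_le_of_ne h' hne.symm

lemma sign_swap_single {i : Fin n} {t : Finset (Fin n)} (h : i ∉ t) :
    sign {i} t = (-1 : ℝ) ^ t.card * sign t {i} := by
  have h1 := sign_comm_single h
  have h2 := sign_mul_self t {i}
  calc sign {i} t = sign {i} t * (sign t {i} * sign t {i}) := by rw [h2, mul_one]
    _ = (sign {i} t * sign t {i}) * sign t {i} := by ring
    _ = _ := by rw [h1]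

end MV
namespace MV
open Finset
variable {n : ℕ}

lemma pair_apply (v w : MV n) : pair v w = ∑ s : Finset (Fin n), v s * w s := rfl

lemma pair_delta_right (v : MV n) (t : Finset (Fin n)) : pair v (delta t) = v t := by
  unfold pair delta
  simp [mul_ite]

lemma pair_delta_left (t : Finset (Fin n)) (w : MV n) : pair (delta t) w = w t := by
  unfold pair delta
  simp [ite_mul]

lemma pair_add_left (v v' w : MV n) : pair (v + v') w = pair v w + pair v' w := by
  unfold pair
  simp only [Pi.add_apply, add_mul]
  exact Finset.sum_add_distrib

lemma pair_add_right (v w w' : MV n) : pair v (w + w') = pair v w + pair v w' := by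
  unfold pair
  simp only [Pi.add_apply, mul_add]
  exact Finset.sum_add_distrib

lemma pair_smul_left (c : ℝ) (v w : MV n) : pair (c • v) w = c * pair v w := by
  unfold pair
  rw [Finset.mul_sum]
  exact Finset.sum_congr rfl fun s _ => by simp [mul_assoc]

lemma pair_smul_right (c : ℝ) (v w : MV n) : pair v (c • w) = c * pair v w := by
  unfold pair
  rw [Finset.mul_sum]
  exact Finset.sum_congr rfl fun s _ => by simp; ring

lemma wedge_apply (v w : MV n) (u : Finset (Fin n)) :
    wedge v w u = ∑ s ∈ u.powerset, sign s (u \ s) * v s * w (u \ s) := rfl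

lemma wedge_add_left (a b z : MV n) : wedge (a + b) z = wedge a z + wedge b z := by
  funext u
  simp only [wedge, Pi.add_apply, add_mul, mul_add]
  exact Finset.sum_add_distrib

lemma wedge_add_right (x a b : MV n) : wedge x (a + b) = wedge x a + wedge x b := by
  funext u
  simp only [wedge, Pi.add_apply, mul_add]
  exact Finset.sum_add_distrib

lemma wedge_smul_left (c : ℝ) (a z : MV n) : wedge (c • a) z = c • wedge a z := by
  funext u
  simp only [wedge, Pi.smul_apply, smul_eq_mul]
  rw [Finset.mul_sum]
  exact Finset.sum_congr rfl fun s _ => by ring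

lemma wedge_smul_right (c : ℝ) (x a : MV n) : wedge x (c • a) = c • wedge x a := by
  funext u
  simp only [wedge, Pi.smul_apply, smul_eq_mul]
  rw [Finset.mul_sum]
  exact Finset.sum_congr rfl fun s _ => by ring

lemma imul_apply (v a : MV n) (t : Finset (Fin n)) :
    imul v a t = pair v (wedge a (delta t)) := rfl

lemma imul_add_left (v v' a : MV n) : imul (v + v') a = imul v a + imul v' a := by
  funext t
  simp only [imul, Pi.add_apply, pair_add_left]

lemma imul_smul_left (c : ℝ) (v a : MV n) : imul (c • v) a = c • imul v a := by
  funext t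
  simp only [imul, Pi.smul_apply, smul_eq_mul, pair_smul_left]

lemma imul_add_right (v a b : MV n) : imul v (a + b) = imul v a + imul v b := by
  funext t
  simp only [imul, Pi.add_apply, wedge_add_left, pair_add_right]

lemma imul_smul_right (c : ℝ) (v a : MV n) : imul v (c • a) = c • imul v a := by
  funext t
  simp only [imul, Pi.smul_apply, smul_eq_mul, wedge_smul_left, pair_smul_right]

lemma toVec_apply (v : MV n) (i : Fin n) : toVec v i = v {i} := by unfold toVec; rfl

/-- `v ↦ pair v w` as a linear map. -/
def pairL (w : MV n) : MV n →ₗ[ℝ] ℝ where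
  toFun v := pair v w
  map_add' a b := pair_add_left a b w
  map_smul' c a := pair_smul_left c a w

/-- `w ↦ pair v w` as a linear map. -/
def pairR (v : MV n) : MV n →ₗ[ℝ] ℝ where
  toFun w := pair v w
  map_add' a b := pair_add_right v a b
  map_smul' c a := pair_smul_right c v a

/-- `a ↦ wedge a z` as a linear map. -/
def wedgeL (z : MV n) : MV n →ₗ[ℝ] MV n where
  toFun a := wedge a z
  map_add' a b := wedge_add_left a b z
  map_smul' c a := wedge_smul_left c a z

/-- `a ↦ wedge x a` as a linear map. -/
def wedgeR (x : MV n) : MV n →ₗ[ℝ] MV n where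
  toFun a := wedge x a
  map_add' a b := wedge_add_right x a b
  map_smul' c a := wedge_smul_right c x a

/-- `v ↦ imul v a` as a linear map. -/
def imulL (a : MV n) : MV n →ₗ[ℝ] MV n where
  toFun v := imul v a
  map_add' v v' := imul_add_left v v' a
  map_smul' c v := imul_smul_left c v a

/-- `a ↦ imul v a` as a linear map. -/
def imulR (v : MV n) : MV n →ₗ[ℝ] MV n where
  toFun a := imul v a
  map_add' a b := imul_add_right v a b
  map_smul' c a := imul_smul_right c v a

/-- `toVec` as a linear map. -/
def toVecL : MV n →ₗ[ℝ] Euc n where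
  toFun v := toVec v
  map_add' a b := rfl
  map_smul' c a := by ext i; rfl

lemma delta_decomp (v : MV n) : v = ∑ s : Finset (Fin n), v s • delta s := by
  funext t
  rw [Finset.sum_apply]
  simp only [Pi.smul_apply, delta, smul_eq_mul, mul_ite, mul_one, mul_zero]
  rw [Finset.sum_ite_eq Finset.univ t v]
  simp

lemma embed_decomp (x : Euc n) : embed x = ∑ i : Fin n, x i • delta {i} := by
  funext s
  rw [Finset.sum_apply]
  unfold embed delta
  exact Finset.sum_congr rfl fun i _ => by simp [mul_ite]

end MV
namespace MV
open Finset
variable {n : ℕ}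

lemma imul_delta (v : MV n) (t : Finset (Fin n)) :
    imul v (delta t) = fun u =>
      if Disjoint t u then sign t u * v (t ∪ u) else 0 := by
  funext u
  rw [imul_apply, pair_apply]
  have hwdd : ∀ s : Finset (Fin n), wedge (delta t) (delta u) s
      = if t ⊆ s ∧ s \ t = u then sign t u else 0 := by
    intro s
    rw [wedge_apply]
    have : ∀ s' ∈ s.powerset, sign s' (s \ s') * delta t s' * delta u (s \ s')
        = if s' = t then (if s \ t = u then sign t u else 0) else 0 := by
      intro s' _
      unfold delta
      split_ifs with h1 h2 h2 <;> simp_all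
    rw [Finset.sum_congr rfl this, Finset.sum_ite_eq' s.powerset t]
    by_cases h1 : t ⊆ s <;> by_cases h2 : s \ t = u <;>
      simp [Finset.mem_powerset, h1, h2]
  rw [Finset.sum_congr rfl fun s _ => by rw [hwdd s]]
  by_cases hd : Disjoint t u
  · simp only [hd, if_true]
    rw [Finset.sum_eq_single (t ∪ u)]
    · have h1 : t ⊆ t ∪ u := Finset.subset_union_left
      have h2 : (t ∪ u) \ t = u := by
        rw [Finset.union_sdiff_cancel_left hd]
      simp [h1, h2, mul_comm]
    · intro s _ hs
      have : ¬ (t ⊆ s ∧ s \ t = u) := by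
        rintro ⟨h1, h2⟩
        exact hs (by rw [← h2, Finset.union_sdiff_of_subset h1])
      simp [this]
    · intro h; exact absurd (Finset.mem_univ _) h
  · simp only [hd, if_false]
    apply Finset.sum_eq_zero
    intro s _
    have : ¬ (t ⊆ s ∧ s \ t = u) := by
      rintro ⟨h1, h2⟩
      exact hd (by rw [← h2]; exact Finset.disjoint_sdiff)
    simp [this]

lemma imul_delta_apply (v : MV n) (t u : Finset (Fin n)) :
    imul v (delta t) u = if Disjoint t u then sign t u * v (t ∪ u) else 0 := by
  rw [imul_delta]

lemma wedge_delta_singleton_left (i : Fin n) (z : MV n) (u : Finset (Fin n)) :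
    wedge (delta {i}) z u = if i ∈ u then sign {i} (u.erase i) * z (u.erase i) else 0 := by
  rw [wedge_apply]
  have : ∀ s ∈ u.powerset, sign s (u \ s) * delta {i} s * z (u \ s)
      = if s = {i} then sign {i} (u \ {i}) * z (u \ {i}) else 0 := by
    intro s _
    unfold delta
    split_ifs with h <;> simp_all
  rw [Finset.sum_congr rfl this, Finset.sum_ite_eq' u.powerset {i}]
  simp [Finset.mem_powerset, Finset.singleton_subset_iff, Finset.erase_eq]

lemma wedge_delta_singleton_right (a : MV n) (i : Fin n) (u : Finset (Fin n)) :
    wedge a (delta {i}) u = if i ∈ u then sign (u.erase i) {i} * a (u.erase i) else 0 := by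
  rw [wedge_apply]
  by_cases hi : i ∈ u
  · rw [Finset.sum_eq_single (u.erase i)]
    · have h1 : u \ u.erase i = {i} := by
        rw [Finset.erase_eq, Finset.sdiff_sdiff_self_left, Finset.inter_singleton_of_mem hi]
      simp [h1, delta, hi, mul_comm]
    · intro s hs hne
      rw [Finset.mem_powerset] at hs
      have : u \ s ≠ {i} := by
        intro h
        apply hne
        have := congrArg (u \ ·) h
        rw [Finset.sdiff_sdiff_eq_self hs] at this
        rw [this, Finset.erase_eq]
      simp [delta, this]
    · intro h
      exact absurd (by rw [Finset.mem_powerset]; exact Finset.erase_subset _ _) h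
  · simp only [hi, if_false]
    apply Finset.sum_eq_zero
    intro s hs
    rw [Finset.mem_powerset] at hs
    have : u \ s ≠ {i} := by
      intro h
      apply hi
      have : i ∈ u \ s := by rw [h]; exact Finset.mem_singleton_self i
      exact (Finset.mem_sdiff.mp this).1
    simp [delta, this]

lemma wedge_embed_apply (x : Euc n) (z : MV n) (u : Finset (Fin n)) :
    wedge (embed x) z u
      = ∑ i : Fin n, (if i ∈ u then sign {i} (u.erase i) * x i * z (u.erase i) else 0) := by
  have : wedge (embed x) z = ∑ i : Fin n, x i • wedge (delta {i}) z := by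
    rw [embed_decomp]
    rw [show (∑ i : Fin n, x i • delta {i}).wedge z
        = ∑ i : Fin n, wedge (x i • delta {i}) z from map_sum (wedgeL z) _ _]
    exact Finset.sum_congr rfl fun i _ => wedge_smul_left _ _ _
  rw [this, Finset.sum_apply]
  apply Finset.sum_congr rfl
  intro i _
  rw [Pi.smul_apply, wedge_delta_singleton_left, smul_eq_mul]
  split_ifs <;> ring

lemma imul_embed_decomp (v : MV n) (x : Euc n) :
    imul v (embed x) = ∑ i : Fin n, x i • imul v (delta {i}) := by
  rw [embed_decomp]
  rw [show v.imul (∑ i : Fin n, x i • delta {i})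
      = ∑ i : Fin n, imul v (x i • delta {i}) from map_sum (imulR v) _ _]
  exact Finset.sum_congr rfl fun i _ => imul_smul_right _ _ _

lemma imul_embed_apply (v : MV n) (x : Euc n) (t : Finset (Fin n)) :
    imul v (embed x) t
      = ∑ i : Fin n, (if i ∈ t then 0 else sign {i} t * x i * v (insert i t)) := by
  rw [imul_embed_decomp, Finset.sum_apply]
  apply Finset.sum_congr rfl
  intro i _
  rw [Pi.smul_apply, imul_delta, smul_eq_mul]
  by_cases h : i ∈ t
  · simp [Finset.disjoint_singleton_left, h]
  · have hd : Disjoint ({i} : Finset (Fin n)) t := Finset.disjoint_singleton_left.mpr h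
    simp only [hd, if_true, h, if_false, ← Finset.insert_eq]
    ring

/-- Key identity: `∑ i, e_i ∧ (v ⌟ dx_i) = (card u) • v` pointwise. -/
lemma sum_wedge_imul_apply (v : MV n) (u : Finset (Fin n)) :
    (∑ i : Fin n, wedge (delta {i}) (imul v (delta {i}))) u = (u.card : ℝ) * v u := by
  rw [Finset.sum_apply]
  have : ∀ i : Fin n, wedge (delta {i}) (imul v (delta {i})) u
      = if i ∈ u then v u else 0 := by
    intro i
    rw [wedge_delta_singleton_left]
    by_cases hi : i ∈ u
    · have hd : Disjoint ({i} : Finset (Fin n)) (u.erase i) := by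
        simp [Finset.disjoint_singleton_left]
      have hu : {i} ∪ u.erase i = u := by
        rw [← Finset.insert_eq, Finset.insert_erase hi]
      rw [imul_delta]
      simp only [hd, if_true, hu, hi]
      rw [← mul_assoc, sign_mul_self, one_mul]
    · simp [hi]
  rw [Finset.sum_congr rfl fun i _ => this i]
  rw [Finset.sum_ite_mem, Finset.univ_inter, Finset.sum_const, nsmul_eq_mul]

lemma imul_imul_delta_apply (v : MV n) (i j : Fin n) (u : Finset (Fin n)) :
    imul (imul v (delta {i})) (delta {j}) u
      = if j ∉ u ∧ i ∉ u ∧ i ≠ j then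
          sign {j} u * sign {i} ({j} ∪ u) * v ({i} ∪ ({j} ∪ u)) else 0 := by
  rw [imul_delta_apply]
  by_cases hj : j ∈ u
  · simp [Finset.disjoint_singleton_left, hj]
  · have h1 : Disjoint ({j} : Finset (Fin n)) u := Finset.disjoint_singleton_left.mpr hj
    rw [if_pos h1, imul_delta_apply]
    by_cases h2 : Disjoint ({i} : Finset (Fin n)) ({j} ∪ u)
    · have hi : i ∉ u := by
        intro h
        exact (Finset.disjoint_singleton_left.mp h2) (Finset.mem_union_right _ h)
      have hij : i ≠ j := by
        intro h
        subst h
        exact (Finset.disjoint_singleton_left.mp h2)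
          (Finset.mem_union_left _ (Finset.mem_singleton_self i))
      rw [if_pos h2, if_pos ⟨hj, hi, hij⟩]
      ring
    · have hcond : ¬ (j ∉ u ∧ i ∉ u ∧ i ≠ j) := by
        rintro ⟨-, hi, hij⟩
        exact h2 (by simp [Finset.disjoint_singleton_left, hi, hij, Ne.symm hij])
      rw [if_neg h2, mul_zero, if_neg hcond]

lemma imul_delta_anticomm (v : MV n) (i j : Fin n) :
    imul (imul v (delta {i})) (delta {j}) = - imul (imul v (delta {j})) (delta {i}) := by
  funext u
  rw [Pi.neg_apply, imul_imul_delta_apply, imul_imul_delta_apply]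
  by_cases h : j ∉ u ∧ i ∉ u ∧ i ≠ j
  · obtain ⟨hj, hi, hij⟩ := h
    rw [if_pos ⟨hj, hi, hij⟩, if_pos ⟨hi, hj, fun e => hij e.symm⟩]
    have e1 : sign {i} ({j} ∪ u) = sign {i} {j} * sign {i} u :=
      sign_union_right _ (Finset.disjoint_singleton_left.mpr hj)
    have e2 : sign {j} ({i} ∪ u) = sign {j} {i} * sign {j} u :=
      sign_union_right _ (Finset.disjoint_singleton_left.mpr hi)
    have e3 : ({i} : Finset (Fin n)) ∪ ({j} ∪ u) = {j} ∪ ({i} ∪ u) := by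
      rw [← Finset.union_assoc, ← Finset.union_assoc,
        Finset.union_comm ({i} : Finset (Fin n))]
    have e4 : sign {j} {i} = - sign {i} {j} := sign_singleton_swap (fun e => hij e.symm)
    rw [e1, e2, e3, e4]
    ring
  · rw [if_neg h, if_neg (by tauto), neg_zero]

lemma imul_embed_zero_anticomm (v : MV n) (x : Euc n) (i : Fin n)
    (h : imul v (embed x) = 0) : imul (imul v (delta {i})) (embed x) = 0 := by
  rw [imul_embed_decomp]
  have : ∀ j : Fin n, x j • imul (imul v (delta {i})) (delta {j})
      = - (x j • imul (imul v (delta {j})) (delta {i})) := by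
    intro j
    rw [imul_delta_anticomm, smul_neg]
  rw [Finset.sum_congr rfl fun j _ => this j, Finset.sum_neg_distrib]
  have h2 : ∑ j : Fin n, x j • imul (imul v (delta {j})) (delta {i})
      = imul (imul v (embed x)) (delta {i}) := by
    calc ∑ j : Fin n, x j • imul (imul v (delta {j})) (delta {i})
        = ∑ j : Fin n, imulL (delta {i}) (x j • imul v (delta {j})) := by
          apply Finset.sum_congr rfl
          intro j _
          rw [_root_.map_smul]
          rfl
      _ = imulL (delta {i}) (∑ j : Fin n, x j • imul v (delta {j})) :=
          (map_sum _ _ _).symm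
      _ = imul (imul v (embed x)) (delta {i}) := by
          rw [← imul_embed_decomp]
          rfl
  rw [h2, h]
  have h3 : imul (0 : MV n) (delta {i}) = 0 := map_zero (imulL (delta {i}))
  rw [h3, neg_zero]

lemma imul_delta_grade {k : ℕ} {v : MV n} (hv : IsGrade (k + 1) v) (i : Fin n) :
    IsGrade k (imul v (delta {i})) := by
  intro u hu
  rw [imul_delta_apply]
  split_ifs with hd
  · have : ({i} ∪ u).card = u.card + 1 := by
      rw [Finset.card_union_of_disjoint hd, Finset.card_singleton]
      omega
    rw [hv _ (by omega), mul_zero]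
  · rfl

lemma wedgeFam_zero (w : Fin 0 → Euc n) : wedgeFam w = delta ∅ := by
  unfold wedgeFam
  simp

lemma wedgeFam_succ {m : ℕ} (w : Fin (m + 1) → Euc n) :
    wedgeFam w = wedge (embed (w 0)) (wedgeFam fun i => w i.succ) := by
  unfold wedgeFam
  rw [List.ofFn_succ]
  rfl

end MV
namespace MV
open Finset
variable {n : ℕ}

/-- Contraction of a covector `c` by the vector `x`. -/
def ic (x : Euc n) (c : MV n) : MV n :=
  fun t => ∑ i : Fin n, if i ∈ t then 0 else sign {i} t * x i * c (insert i t)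

lemma sum_insert_erase (i : Fin n) (G : Finset (Fin n) → ℝ) :
    ∑ u : Finset (Fin n), (if i ∈ u then G (u.erase i) else 0)
      = ∑ t : Finset (Fin n), (if i ∈ t then 0 else G t) := by
  have h1 : ∑ u : Finset (Fin n), (if i ∈ u then G (u.erase i) else 0)
      = ∑ u ∈ Finset.univ.filter (fun u : Finset (Fin n) => i ∈ u), G (u.erase i) :=
    (Finset.sum_filter _ _).symm
  have h2 : ∑ t : Finset (Fin n), (if i ∈ t then 0 else G t)
      = ∑ t ∈ Finset.univ.filter (fun t => i ∉ t), G t := by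
    rw [Finset.sum_filter]
    exact Finset.sum_congr rfl fun t _ => by by_cases h : i ∈ t <;> simp [h]
  rw [h1, h2]
  apply Finset.sum_bij' (fun (u : Finset (Fin n)) _ => u.erase i) (fun (t : Finset (Fin n)) _ => insert i t)
  · intro u hu
    simp only [Finset.mem_filter, Finset.mem_univ, true_and] at hu ⊢
    exact Finset.notMem_erase i u
  · intro t ht
    simp only [Finset.mem_filter, Finset.mem_univ, true_and] at ht ⊢
    exact Finset.mem_insert_self i t
  · intro u hu
    simp only [Finset.mem_filter, Finset.mem_univ, true_and] at hu
    exact Finset.insert_erase hu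
  · intro t ht
    simp only [Finset.mem_filter, Finset.mem_univ, true_and] at ht
    exact Finset.erase_insert ht
  · intro u _
    rfl

/-- Adjunction: `⟨x ∧ V; c⟩ = ⟨V; x ⌟ c⟩`. -/
lemma pair_wedge_embed (x : Euc n) (V c : MV n) :
    pair (wedge (embed x) V) c = pair V (ic x c) := by
  rw [pair_apply]
  have step1 : ∀ u : Finset (Fin n), wedge (embed x) V u * c u
      = ∑ i : Fin n,
          (if i ∈ u then sign {i} (u.erase i) * x i * V (u.erase i) * c u else 0) := by
    intro u
    rw [wedge_embed_apply, Finset.sum_mul]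
    exact Finset.sum_congr rfl fun i _ => by split_ifs <;> simp
  rw [Finset.sum_congr rfl fun u _ => step1 u, Finset.sum_comm]
  have step2 : ∀ i : Fin n,
      (∑ u : Finset (Fin n),
        (if i ∈ u then sign {i} (u.erase i) * x i * V (u.erase i) * c u else 0))
      = ∑ t : Finset (Fin n),
          (if i ∈ t then 0 else sign {i} t * x i * V t * c (insert i t)) := by
    intro i
    rw [← sum_insert_erase i (fun t => sign {i} t * x i * V t * c (insert i t))]
    apply Finset.sum_congr rfl
    intro u _
    by_cases h : i ∈ u
    · simp only [h, if_true, Finset.insert_erase h]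
    · simp only [h, if_false]
  rw [Finset.sum_congr rfl fun i _ => step2 i, Finset.sum_comm]
  rw [pair_apply]
  apply Finset.sum_congr rfl
  intro t _
  unfold ic
  rw [Finset.mul_sum]
  apply Finset.sum_congr rfl
  intro i _
  split_ifs <;> ring

lemma ic_grade {g : ℕ} {a : MV n} (ha : IsGrade g a) (x : Euc n) :
    IsGrade (g - 1) (ic x a) := by
  intro t ht
  unfold ic
  apply Finset.sum_eq_zero
  intro i _
  split_ifs with h
  · rfl
  · rw [ha _ (by rw [Finset.card_insert_of_notMem h]; omega), mul_zero]

/-- The antiderivation identity specialised to a 1-form `dx_i`. -/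
lemma ic_wedge_single {g : ℕ} {a : MV n} (ha : IsGrade g a) (x : Euc n) (i : Fin n) :
    ic x (wedge a (delta {i}))
      = wedge (ic x a) (delta {i}) + ((-1 : ℝ) ^ g * x i) • a := by
  funext t
  rw [Pi.add_apply, Pi.smul_apply, smul_eq_mul]
  unfold ic
  by_cases hit : i ∈ t
  · -- i ∈ t
    have hTj : ∀ j : Fin n,
        (if j ∈ t then 0 else sign {j} t * x j * wedge a (delta {i}) (insert j t))
        = (if j ∈ t then 0 else
            sign {j} t * sign (insert j (t.erase i)) {i} * x j * a (insert j (t.erase i))) := by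
      intro j
      by_cases hj : j ∈ t
      · simp [hj]
      · have hji : j ≠ i := fun e => hj (e ▸ hit)
        have h1 : i ∈ insert j t := Finset.mem_insert_of_mem hit
        rw [wedge_delta_singleton_right]
        rw [if_pos h1, Finset.erase_insert_of_ne hji]
        simp only [hj, if_false]
        ring
    rw [Finset.sum_congr rfl fun j _ => hTj j]
    rw [wedge_delta_singleton_right, if_pos hit]
    have hrhs : sign (t.erase i) {i} *
        (∑ j : Fin n, if j ∈ t.erase i then 0
          else sign {j} (t.erase i) * x j * a (insert j (t.erase i)))
        = ∑ j : Fin n, (if j ∈ t.erase i then 0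
            else sign (t.erase i) {i} * sign {j} (t.erase i) * x j * a (insert j (t.erase i))) := by
      rw [Finset.mul_sum]
      exact Finset.sum_congr rfl fun j _ => by split_ifs <;> ring
    rw [hrhs]
    -- compare the two sums term by term away from `j = i`
    rw [← Finset.sum_erase_add Finset.univ _ (Finset.mem_univ i),
      ← Finset.sum_erase_add Finset.univ
        (fun j => if j ∈ t.erase i then 0
          else sign (t.erase i) {i} * sign {j} (t.erase i) * x j * a (insert j (t.erase i)))
        (Finset.mem_univ i)]
    have hterm : ∀ j ∈ Finset.univ.erase i,
        (if j ∈ t then 0 else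
          sign {j} t * sign (insert j (t.erase i)) {i} * x j * a (insert j (t.erase i)))
        = (if j ∈ t.erase i then 0
            else sign (t.erase i) {i} * sign {j} (t.erase i) * x j * a (insert j (t.erase i))) := by
      intro j hjmem
      have hji : j ≠ i := Finset.ne_of_mem_erase hjmem
      by_cases hj : j ∈ t
      · have : j ∈ t.erase i := Finset.mem_erase.mpr ⟨hji, hj⟩
        simp [hj, this]
      · have hj' : j ∉ t.erase i := fun h => hj (Finset.mem_of_mem_erase h)
        rw [if_neg hj, if_neg hj']
        have hjt : sign {j} t = sign {j} {i} * sign {j} (t.erase i) := by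
          conv_lhs => rw [show t = {i} ∪ t.erase i by
            rw [← Finset.insert_eq, Finset.insert_erase hit]]
          exact sign_union_right _ (by
            simp [Finset.disjoint_singleton_left])
        have hins : sign (insert j (t.erase i)) {i}
            = sign {j} {i} * sign (t.erase i) {i} := by
          rw [Finset.insert_eq]
          exact sign_union_left _ (Finset.disjoint_singleton_left.mpr hj')
        rw [hjt, hins]
        have hsq := sign_mul_self ({j} : Finset (Fin n)) ({i} : Finset (Fin n))
        linear_combination (sign {j} (t.erase i) * sign (t.erase i) {i} * x j
          * a (insert j (t.erase i))) * hsq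
    rw [Finset.sum_congr rfl hterm]
    -- now the `j = i` terms
    have hTi : (if i ∈ t then 0 else
        sign {i} t * sign (insert i (t.erase i)) {i} * x i * a (insert i (t.erase i))) = 0 := by
      simp [hit]
    have hSi : (if i ∈ t.erase i then 0
        else sign (t.erase i) {i} * sign {i} (t.erase i) * x i * a (insert i (t.erase i)))
        = (-1 : ℝ) ^ (t.erase i).card * x i * a t := by
      rw [if_neg (Finset.notMem_erase i t), Finset.insert_erase hit]
      rw [show sign (t.erase i) {i} * sign {i} (t.erase i)
          = sign {i} (t.erase i) * sign (t.erase i) {i} by ring]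
      rw [sign_comm_single (Finset.notMem_erase i t)]
    rw [hTi, hSi, add_zero]
    -- remains: S-sum = S-sum + ((-1)^(card-1) x i a t + (-1)^g x i a t)
    have hcancel : (-1 : ℝ) ^ (t.erase i).card * x i * a t + (-1 : ℝ) ^ g * x i * a t = 0 := by
      by_cases hat : a t = 0
      · rw [hat]; ring
      · have hcard : t.card = g := by_contra fun h => hat (ha t h)
        have hpos : 1 ≤ t.card := Finset.card_pos.mpr ⟨i, hit⟩
        have hpow : (-1 : ℝ) ^ (t.erase i).card * (-1) = (-1 : ℝ) ^ g := by
          rw [Finset.card_erase_of_mem hit, ← pow_succ, Nat.sub_add_cancel hpos, hcard]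
        linear_combination (-(x i * a t)) * hpow
    linarith [hcancel]
  · -- i ∉ t
    rw [wedge_delta_singleton_right, if_neg hit, zero_add]
    rw [Finset.sum_eq_single i]
    · rw [if_neg hit, wedge_delta_singleton_right,
        if_pos (Finset.mem_insert_self i t), Finset.erase_insert hit]
      by_cases hat : a t = 0
      · rw [hat]; ring
      · have hcard : t.card = g := by_contra fun h => hat (ha t h)
        have hpow : sign {i} t * sign t {i} = (-1 : ℝ) ^ g := by
          rw [sign_comm_single hit, hcard]
        linear_combination (x i * a t) * hpow
    · intro j _ hji
      by_cases hj : j ∈ t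
      · simp [hj]
      · rw [if_neg hj, wedge_delta_singleton_right]
        have hij : i ≠ j := fun e => hji e.symm
        have : i ∉ insert j t := by
          simp [Finset.mem_insert, hij, hit]
        rw [if_neg this, mul_zero]
    · intro h
      exact absurd (Finset.mem_univ i) h

end MV
namespace MV
open Finset
variable {n : ℕ}

lemma embed_add (x y : Euc n) : embed (x + y) = embed x + embed y := by
  funext s
  simp only [embed, Pi.add_apply, PiLp.add_apply]
  rw [← Finset.sum_add_distrib]
  apply Finset.sum_congr rfl
  intro i _
  split_ifs <;> simp

/-- Part-2 key induction: the contraction of a wedge of vectors of `W` by a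
`(m-1)`-covector lies in `W`. -/
lemma toVec_imul_wedgeFam_mem (W : Submodule ℝ (Euc n)) :
    ∀ (m : ℕ) (w : Fin m → Euc n), (∀ i, w i ∈ W) → ∀ a : MV n, IsGrade (m - 1) a →
      toVec (imul (wedgeFam w) a) ∈ W := by
  intro m
  induction m with
  | zero =>
    intro w _ a _
    have h0 : toVec (imul (wedgeFam w) a) = 0 := by
      ext i
      rw [toVec_apply, wedgeFam_zero, imul_apply, pair_delta_left,
        wedge_delta_singleton_right]
      simp
    rw [h0]
    exact W.zero_mem
  | succ m IH =>
    intro w hw a ha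
    have ha' : IsGrade m a := ha
    set x := w 0 with hx
    set V' := wedgeFam (fun i => w i.succ) with hV'
    have key : toVec (imul (wedgeFam w) a)
        = toVec (imul V' (ic x a)) + ((-1 : ℝ) ^ m * pair V' a) • x := by
      ext i
      rw [PiLp.add_apply, PiLp.smul_apply, smul_eq_mul]
      rw [toVec_apply, toVec_apply, imul_apply, imul_apply]
      rw [wedgeFam_succ w, ← hx, ← hV', pair_wedge_embed]
      rw [ic_wedge_single ha' x i]
      rw [pair_add_right, pair_smul_right]
      ring
    rw [key]
    apply W.add_mem
    · exact IH _ (fun i => hw i.succ) (ic x a) (ic_grade ha' x)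
    · exact W.smul_mem _ (hw 0)

/-- The set of wedge products of `m` vectors of `W`. -/
def LWset (m : ℕ) (W : Submodule ℝ (Euc n)) : Set (MV n) :=
  {z : MV n | ∃ w : Fin m → Euc n, (∀ i, w i ∈ W) ∧ z = wedgeFam w}

lemma wedgeFam_cons {m : ℕ} (u : Euc n) (w : Fin m → Euc n) :
    wedgeFam (Fin.cons u w) = wedge (embed u) (wedgeFam w) := by
  rw [wedgeFam_succ]
  simp [Fin.cons_zero, Fin.cons_succ]

lemma wedge_embed_mem_span {W : Submodule ℝ (Euc n)} {u : Euc n} (hu : u ∈ W)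
    {m : ℕ} {z : MV n} (hz : z ∈ Submodule.span ℝ (LWset m W)) :
    wedge (embed u) z ∈ Submodule.span ℝ (LWset (m + 1) W) := by
  have hle : Submodule.span ℝ (LWset m W)
      ≤ (Submodule.span ℝ (LWset (m + 1) W)).comap (wedgeR (embed u)) := by
    rw [Submodule.span_le]
    rintro z ⟨w, hw, rfl⟩
    simp only [Set.mem_setOf_eq, SetLike.mem_coe, Submodule.mem_comap]
    apply Submodule.subset_span
    refine ⟨Fin.cons u w, ?_, ?_⟩
    · intro i
      refine Fin.cases ?_ ?_ i
      · simpa using hu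
      · intro j; simpa using hw j
    · exact (wedgeFam_cons u w).symm
  exact hle hz

end MV
namespace MV
open Finset RealInnerProductSpace
variable {n : ℕ}

lemma delta_singleton_eq_embed (i : Fin n) :
    delta ({i} : Finset (Fin n)) = embed (EuclideanSpace.single i (1 : ℝ)) := by
  funext s
  unfold embed delta
  rw [Finset.sum_eq_single i]
  · simp [EuclideanSpace.single_apply]
  · intro j _ hji
    by_cases h : s = {j}
    · simp [h, EuclideanSpace.single_apply, hji]
    · simp [h]
  · intro h; exact absurd (Finset.mem_univ i) h

/-- A grade-`k` multivector killed by contraction against `Wᗮ` lies in `Λ_k(W)`. -/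
lemma mem_span_wedge_of_orth (W : Submodule ℝ (Euc n)) :
    ∀ (k : ℕ) (v : MV n), IsGrade k v →
      (∀ x ∈ Wᗮ, imul v (embed x) = 0) →
      v ∈ Submodule.span ℝ (LWset k W) := by
  intro k
  induction k with
  | zero =>
    intro v hgrade _
    have hv : v = v ∅ • wedgeFam (fun _ : Fin 0 => (0 : Euc n)) := by
      rw [wedgeFam_zero]
      funext s
      by_cases h : s = ∅
      · subst h; simp [delta]
      · rw [hgrade s (by simpa [Finset.card_eq_zero] using h)]
        simp [delta, h]
    rw [hv]
    exact Submodule.smul_mem _ _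
      (Submodule.subset_span ⟨_, fun i => i.elim0, rfl⟩)
  | succ k IH =>
    intro v hgrade H
    set P : Fin n → Euc n := fun i =>
      (W.orthogonalProjectionOnto (EuclideanSpace.single i 1) : Euc n) with hP
    set q : Fin n → Euc n := fun i => EuclideanSpace.single i 1 - P i with hq
    have hqW : ∀ i, q i ∈ Wᗮ := fun i =>
      Submodule.sub_starProjection_mem_orthogonal (K := W) _
    have hPW : ∀ i, P i ∈ W := fun i => Submodule.coe_mem _
    have hcoord : ∀ (y : Euc n) (j : Fin n), y j = ⟪y, EuclideanSpace.single j (1 : ℝ)⟫ := by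
      intro y j
      rw [EuclideanSpace.inner_single_right]
      simp
    have hsymm : ∀ i j, q i j = q j i := by
      intro i j
      rw [hcoord (q i) j, hcoord (q j) i, hq]
      simp only [inner_sub_left]
      have e1 : ⟪(P i : Euc n), EuclideanSpace.single j (1 : ℝ)⟫
          = ⟪(P j : Euc n), EuclideanSpace.single i (1 : ℝ)⟫ := by
        rw [hP]
        simp only [← Submodule.starProjection_apply]
        rw [Submodule.inner_starProjection_left_eq_right]
        rw [real_inner_comm]
      have e2 : ⟪EuclideanSpace.single i (1 : ℝ), EuclideanSpace.single j (1 : ℝ)⟫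
          = ⟪EuclideanSpace.single j (1 : ℝ), EuclideanSpace.single i (1 : ℝ)⟫ :=
        real_inner_comm _ _
      rw [e1, e2]
    have id1 : ∑ i : Fin n, wedge (delta {i}) (imul v (delta {i}))
        = ((k + 1 : ℕ) : ℝ) • v := by
      funext u
      rw [sum_wedge_imul_apply, Pi.smul_apply, smul_eq_mul]
      by_cases hvu : v u = 0
      · rw [hvu, mul_zero, mul_zero]
      · have hc : u.card = k + 1 := by_contra fun h => hvu (hgrade u h)
        rw [hc]
    have id2 : ∑ i : Fin n, wedge (embed (q i)) (imul v (delta {i})) = 0 := by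
      have e1 : ∀ i, wedge (embed (q i)) (imul v (delta {i}))
          = ∑ j : Fin n, q i j • wedge (delta {j}) (imul v (delta {i})) := by
        intro i
        rw [embed_decomp]
        rw [show wedge (∑ j : Fin n, q i j • delta {j}) (imul v (delta {i}))
            = ∑ j : Fin n, wedge (q i j • delta {j}) (imul v (delta {i}))
            from map_sum (wedgeL (imul v (delta {i}))) _ _]
        exact Finset.sum_congr rfl fun j _ => wedge_smul_left _ _ _
      rw [Finset.sum_congr rfl fun i _ => e1 i, Finset.sum_comm]
      have e2 : ∀ j : Fin n, ∑ i : Fin n, q i j • wedge (delta {j}) (imul v (delta {i}))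
          = wedge (delta {j}) (imul v (embed (q j))) := by
        intro j
        have e3 : ∀ i : Fin n, q i j • wedge (delta {j}) (imul v (delta {i}))
            = wedgeR (delta {j}) (q j i • imul v (delta {i})) := by
          intro i
          rw [hsymm i j, _root_.map_smul]
          rfl
        rw [Finset.sum_congr rfl fun i _ => e3 i, ← map_sum, ← imul_embed_decomp]
        rfl
      rw [Finset.sum_congr rfl fun j _ => e2 j]
      have e4 : ∀ j : Fin n, wedge (delta {j}) (imul v (embed (q j))) = 0 := by
        intro j
        rw [H (q j) (hqW j)]
        exact map_zero (wedgeR (delta {j}))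
      rw [Finset.sum_congr rfl fun j _ => e4 j]
      exact Finset.sum_const_zero
    have id3 : ∑ i : Fin n, wedge (embed (P i)) (imul v (delta {i}))
        = ((k + 1 : ℕ) : ℝ) • v := by
      have eterm : ∀ i : Fin n, wedge (delta {i}) (imul v (delta {i}))
          = wedge (embed (P i)) (imul v (delta {i}))
            + wedge (embed (q i)) (imul v (delta {i})) := by
        intro i
        have hsingle : EuclideanSpace.single i (1 : ℝ) = P i + q i := by
          simp [hq]
        rw [delta_singleton_eq_embed i, hsingle, embed_add, wedge_add_left]
      calc ∑ i : Fin n, wedge (embed (P i)) (imul v (delta {i}))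
          = ∑ i : Fin n, (wedge (delta {i}) (imul v (delta {i}))
              - wedge (embed (q i)) (imul v (delta {i}))) := by
            apply Finset.sum_congr rfl
            intro i _
            rw [eterm i]
            abel
        _ = (∑ i : Fin n, wedge (delta {i}) (imul v (delta {i})))
              - ∑ i : Fin n, wedge (embed (q i)) (imul v (delta {i})) :=
            Finset.sum_sub_distrib _ _
        _ = ((k + 1 : ℕ) : ℝ) • v := by rw [id1, id2, sub_zero]
    have hne : ((k + 1 : ℕ) : ℝ) ≠ 0 := by positivity
    have hv : v = ((k + 1 : ℕ) : ℝ)⁻¹ • ∑ i : Fin n, wedge (embed (P i)) (imul v (delta {i})) := by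
      rw [id3, smul_smul, inv_mul_cancel₀ hne, one_smul]
    rw [hv]
    apply Submodule.smul_mem
    apply Submodule.sum_mem
    intro i _
    exact wedge_embed_mem_span (hPW i)
      (IH (imul v (delta {i})) (imul_delta_grade hgrade i)
        (fun x hx => imul_embed_zero_anticomm v x i (H x hx)))

end MV
/-- **Section 2.2, property (5).** `span(v)` is the smallest linear subspace `W ⊆ ℝⁿ`
with `v ∈ Λ_k(W)`. -/
theorem statement14 {n k : ℕ} (hk : 1 ≤ k) (hkn : k ≤ n)
    (v : MV n) (hg : MV.IsGrade k v) :
    MemLambdaK k v (Submodule.span ℝ (MV.spanSet k v)) ∧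
      ∀ W : Submodule ℝ (Euc n), MemLambdaK k v W →
        MV.spanSet k v ⊆ (W : Set (Euc n)) := by
  constructor
  · show v ∈ Submodule.span ℝ (MV.LWset k (Submodule.span ℝ (MV.spanSet k v)))
    apply MV.mem_span_wedge_of_orth _ k v hg
    intro x hx
    funext t
    show MV.imul v (MV.embed x) t = 0
    rw [MV.imul_embed_apply]
    by_cases ht : t.card = k - 1
    · set b := MV.toVec (MV.imul v (MV.delta t)) with hb
      have hgd : MV.IsGrade (k - 1) (MV.delta t) := by
        intro s hs
        unfold MV.delta
        split_ifs with h
        · exact absurd (h ▸ ht) hs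
        · rfl
      have hbmem : b ∈ MV.spanSet k v := ⟨MV.delta t, hgd, rfl⟩
      have hb0 : (inner ℝ b x : ℝ) = 0 :=
        (Submodule.mem_orthogonal _ x).mp hx b (Submodule.subset_span hbmem)
      have hsum : ∑ i : Fin n, b i * x i = 0 := by
        rw [← hb0, PiLp.inner_apply]
        apply Finset.sum_congr rfl
        intro i _
        simp [RCLike.inner_apply, conj_trivial, mul_comm]
      have hterm : ∀ i : Fin n,
          (if i ∈ t then 0 else MV.sign {i} t * x i * v (insert i t))
          = (-1 : ℝ) ^ t.card * (b i * x i) := by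
        intro i
        rw [hb, MV.toVec_apply, MV.imul_delta_apply]
        by_cases hi : i ∈ t
        · have hnd : ¬ Disjoint t ({i} : Finset (Fin n)) := by
            simp [Finset.disjoint_singleton_right, hi]
          simp [hi, hnd]
        · have hd : Disjoint t ({i} : Finset (Fin n)) :=
            Finset.disjoint_singleton_right.mpr hi
          rw [if_neg hi, if_pos hd]
          rw [Finset.union_comm, ← Finset.insert_eq]
          rw [MV.sign_swap_single hi]
          ring
      rw [Finset.sum_congr rfl fun i _ => hterm i, ← Finset.mul_sum, hsum, mul_zero]
    · apply Finset.sum_eq_zero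
      intro i _
      split_ifs with h
      · rfl
      · rw [hg (insert i t) (by rw [Finset.card_insert_of_notMem h]; omega), mul_zero]
  · intro W hW u hu
    obtain ⟨a, ha, rfl⟩ := hu
    have hle : Submodule.span ℝ
        {z : MV n | ∃ w : Fin k → Euc n, (∀ i, w i ∈ W) ∧ z = MV.wedgeFam w}
        ≤ W.comap (MV.toVecL.comp (MV.imulL a)) := by
      rw [Submodule.span_le]
      rintro z ⟨w, hw, rfl⟩
      simp only [SetLike.mem_coe, Submodule.mem_comap, LinearMap.comp_apply]
      exact MV.toVec_imul_wedgeFam_mem W k w hw a ha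
    exact hle hW
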